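/- For every s with 0 < s < 1 and every θ with 0 < θ < π, the series ∑_{n=1}^∞ sⁿ·sin(nθ)/n² is strictly positive. -/

import Mathlib

open Real

lemma aux_hasSum (θ t : ℝ) (ht : |t| < 1) :
    HasSum (fun n : ℕ => t ^ (n + 1) * Real.sin (((n : ℝ) + 1) * θ) / ((n : ℝ) + 1))
      (-(1 - (t : ℂ) * Complex.exp (θ * Complex.I)).arg) := by
  set z : ℂ := (t : ℂ) * Complex.exp (θ * Complex.I) with hzdef
  have hnorm : ‖z‖ < 1 := by
    have h1 : ‖Complex.exp (θ * Complex.I)‖ = 1 :=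
      Complex.norm_exp_ofReal_mul_I θ
    simpa [hzdef, norm_mul, map_mul, h1, Complex.norm_real, Real.norm_eq_abs] using ht
  have H := Complex.hasSum_im (Complex.hasSum_taylorSeries_neg_log hnorm)
  have H2 := (hasSum_nat_add_iff' 1).mpr H
  simp only [Finset.range_one, Finset.sum_singleton, pow_zero, Nat.cast_zero, div_zero,
    Complex.zero_im, sub_zero, Complex.neg_im, Complex.log_im] at H2
  refine H2.congr_fun fun n => ?_
  have hzpow : z ^ (n + 1) = ((t ^ (n + 1) : ℝ) : ℂ) *
      Complex.exp ((((n : ℝ) + 1) * θ : ℝ) * Complex.I) := by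
    rw [hzdef, mul_pow, ← Complex.exp_nat_mul]
    push_cast
    ring_nf
  rw [hzpow]
  have : (((n : ℕ) + 1 : ℕ) : ℂ) = (((n : ℝ) + 1 : ℝ) : ℂ) := by push_cast; ring
  rw [this, Complex.div_ofReal_im]
  simp only [Complex.mul_im, Complex.ofReal_re, Complex.ofReal_im, zero_mul, add_zero,
    Complex.exp_ofReal_mul_I_im]

theorem tsum_pow_sin_div_sq_pos (s θ : ℝ) (hs0 : 0 < s) (hs1 : s < 1)
    (hθ0 : 0 < θ) (hθπ : θ < π) :
    0 < ∑' n : ℕ, s ^ (n + 1) * Real.sin (((n : ℝ) + 1) * θ) / ((n : ℝ) + 1) ^ 2 := by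
  have hsθ : 0 < Real.sin θ := Real.sin_pos_of_pos_of_lt_pi hθ0 hθπ
  set c : ℕ → ℝ := fun n => Real.sin (((n : ℝ) + 1) * θ) / ((n : ℝ) + 1) with hc
  set F : ℕ → ℝ → ℝ := fun n t => t ^ n * c n with hFdef
  have hn1 : ∀ n : ℕ, (0 : ℝ) < (n : ℝ) + 1 := fun n => by positivity
  have hcb : ∀ n, |c n| ≤ 1 := by
    intro n
    rw [hc, abs_div, abs_of_pos (hn1 n)]
    calc |Real.sin (((n : ℝ) + 1) * θ)| / ((n : ℝ) + 1) ≤ 1 / ((n : ℝ) + 1) := by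
          gcongr; exact Real.abs_sin_le_one _
      _ ≤ 1 := by
          rw [div_le_one (hn1 n)]; linarith [hn1 n]
  have hFbound : ∀ n (x : ℝ), x ∈ Set.Icc (0 : ℝ) s → ‖F n x‖ ≤ s ^ n := by
    intro n x hx
    have h1 : ‖F n x‖ = |x| ^ n * |c n| := by
      rw [hFdef]; simp [abs_mul, abs_pow]
    rw [h1]
    have hxs : |x| ≤ s := by rw [abs_of_nonneg hx.1]; exact hx.2
    calc |x| ^ n * |c n| ≤ s ^ n * 1 :=
          mul_le_mul (pow_le_pow_left₀ (abs_nonneg x) hxs n) (hcb n) (abs_nonneg _)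
            (pow_nonneg hs0.le n)
      _ = s ^ n := mul_one _
  have hsum_geo : Summable fun n : ℕ => s ^ n :=
    summable_geometric_of_lt_one hs0.le hs1
  have hg_cont : ContinuousOn (fun t => ∑' n, F n t) (Set.Icc 0 s) := by
    refine continuousOn_tsum (fun n => ?_) hsum_geo hFbound
    exact ((continuous_pow n).mul continuous_const).continuousOn
  have hg_pos : ∀ x ∈ Set.Ioo (0 : ℝ) s, 0 < ∑' n, F n x := by
    intro x hx
    have hx0 : 0 < x := hx.1
    have hx1 : |x| < 1 := by rw [abs_of_pos hx0]; linarith [hx.2]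
    have H := aux_hasSum θ x hx1
    have him : (1 - (x : ℂ) * Complex.exp (θ * Complex.I)).im < 0 := by
      simp only [Complex.sub_im, Complex.one_im, Complex.mul_im, Complex.ofReal_re,
        Complex.ofReal_im, zero_mul, add_zero, Complex.exp_ofReal_mul_I_im]
      nlinarith
    have harg : (1 - (x : ℂ) * Complex.exp (θ * Complex.I)).arg < 0 :=
      Complex.arg_neg_iff.2 him
    have hL : (0 : ℝ) < -(1 - (x : ℂ) * Complex.exp (θ * Complex.I)).arg := by linarith
    have hfun : (fun n : ℕ => x ^ (n + 1) * Real.sin (((n : ℝ) + 1) * θ) / ((n : ℝ) + 1))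
        = fun n => x * F n x := by
      funext n
      rw [hFdef, hc]
      simp only
      rw [pow_succ]
      ring
    rw [hfun] at H
    have : x * ∑' n, F n x = -(1 - (x : ℂ) * Complex.exp (θ * Complex.I)).arg := by
      rw [← tsum_mul_left]; exact H.tsum_eq
    nlinarith
  have hFi : ∀ n, MeasureTheory.IntegrableOn (F n) (Set.Ioc 0 s) := by
    intro n
    exact ((continuous_pow n).mul continuous_const).integrableOn_Ioc
  have hsum_int : Summable fun n => ∫ t in Set.Ioc (0 : ℝ) s, ‖F n t‖ := by
    refine Summable.of_nonneg_of_le (fun n => MeasureTheory.integral_nonneg fun t => norm_nonneg _)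
      (fun n => ?_) (hsum_geo.mul_right s)
    calc (∫ t in Set.Ioc (0 : ℝ) s, ‖F n t‖)
        ≤ ∫ _t in Set.Ioc (0 : ℝ) s, s ^ n := by
          refine MeasureTheory.setIntegral_mono_on (hFi n).norm
            (MeasureTheory.integrableOn_const measure_Ioc_lt_top.ne)
            measurableSet_Ioc fun x hx => ?_
          exact hFbound n x ⟨hx.1.le, hx.2⟩
      _ = s ^ n * s := by
          rw [MeasureTheory.setIntegral_const]
          simp [Real.volume_Ioc, ENNReal.toReal_ofReal hs0.le, smul_eq_mul]
          rw [max_eq_left hs0.le]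
          ring
  have hterm : ∀ n : ℕ, s ^ (n + 1) * Real.sin (((n : ℝ) + 1) * θ) / ((n : ℝ) + 1) ^ 2
      = ∫ t in Set.Ioc (0 : ℝ) s, F n t := by
    intro n
    rw [← intervalIntegral.integral_of_le hs0.le]
    rw [hFdef]
    simp only
    rw [intervalIntegral.integral_mul_const, integral_pow, hc]
    have h0 : (0 : ℝ) ^ (n + 1) = 0 := zero_pow (Nat.succ_ne_zero n)
    rw [h0, sub_zero, sq]
    have := (hn1 n).ne'
    field_simp
  have key : (∑' n : ℕ, s ^ (n + 1) * Real.sin (((n : ℝ) + 1) * θ) / ((n : ℝ) + 1) ^ 2)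
      = ∫ t in Set.Ioc (0 : ℝ) s, ∑' n, F n t := by
    rw [tsum_congr hterm]
    exact MeasureTheory.integral_tsum_of_summable_integral_norm hFi hsum_int
  rw [key, ← intervalIntegral.integral_of_le hs0.le]
  refine intervalIntegral.intervalIntegral_pos_of_pos_on ?_ hg_pos hs0
  apply ContinuousOn.intervalIntegrable
  rwa [Set.uIcc_of_le hs0.le]
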